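/- Let T = ⟨Γ, L, R⟩ be a rule system on presheaves over a small category C, with Γ small, and let p be a presheaf. Write D for the diagram D_T(p) : L/p ⥤ GM. Let M and M' = M ∪ {m} be partial decompositions of p, with m a maximal object of L/p not in M. Let S_{M,m} be the diagram consisting of, for every object n of the restriction M̃ and every morphism e : n → m in L/p, the span T̃_p(M) ⟵ D(n) ⟶ D(m), whose left leg is the colimit component (T̃_p(M))_n and whose right leg is D(e). Then the colimit of S_{M,m} (a 'generalized pushout'), with structure morphisms t : T̃_p(M) ⟶ Colim(S_{M,m}) and c : D(m) ⟶ Colim(S_{M,m}), yields a colimit cocone of the restriction of D to M̃', with the same apex Colim(S_{M,m}) and with components given at each n in M̃ by t ∘ (T̃_p(M))_n, and at each object n' with a morphism e : n' → m by c ∘ D(e). -/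

import Mathlib

open CategoryTheory CategoryTheory.Limits

universe u

variable (C : Type u) [SmallCategory C]

/-- The category of presheaves over `C`. -/
abbrev GM := Cᵒᵖ ⥤ Type u

/-- A rule system `⟨Γ, L, R⟩` on presheaves over `C`: a small category `Γ` of rules,
a full and faithful left-hand-side functor `L` sending every morphism to a monomorphism,
and a right-hand-side functor `R` sending every morphism to a monomorphism. -/
structure RuleSystem where
  Γ : Type u
  [catΓ : SmallCategory Γ]
  L : Γ ⥤ GM C
  R : Γ ⥤ GM C
  [fullL : L.Full]
  [faithfulL : L.Faithful]
  monoL : ∀ {a b : Γ} (e : a ⟶ b), Mono (L.map e)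
  monoR : ∀ {a b : Γ} (e : a ⟶ b), Mono (R.map e)

attribute [instance] RuleSystem.catΓ RuleSystem.fullL RuleSystem.faithfulL

variable {C}

/-- The instance category `L/p`: objects are pairs `⟨γ, m⟩` with `m : L(γ) ⟶ p` a
monomorphism; morphisms `⟨γ, m⟩ ⟶ ⟨γ', m'⟩` are the morphisms `e : γ ⟶ γ'` of `Γ` with
`m' ∘ L(e) = m`. -/
def Inst (T : RuleSystem C) (p : GM C) :=
  ObjectProperty.FullSubcategory (fun f : CostructuredArrow T.L p => Mono f.hom)

instance (T : RuleSystem C) (p : GM C) : Category (Inst T p) :=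
  ObjectProperty.FullSubcategory.category _

/-- The diagram `D_T(p) : L/p ⥤ GM` sending `⟨γ, m⟩` to `R(γ)` and `e` to `R(e)`. -/
def DT (T : RuleSystem C) (p : GM C) : Inst T p ⥤ GM C :=
  ObjectProperty.ι _ ⋙ CostructuredArrow.proj T.L p ⋙ T.R

/-- An object of the instance category is maximal if every morphism out of it admits a
morphism back. -/
def MaximalInst {T : RuleSystem C} {p : GM C} (n : Inst T p) : Prop :=
  ∀ m : Inst T p, (n ⟶ m) → Nonempty (m ⟶ n)

/-- Objects of the subcategory `M̃` associated to a set `M` of instances: the elements of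
`M` together with all instances admitting a morphism into some element of `M`. -/
def InTilde {T : RuleSystem C} {p : GM C} (M : Set (Inst T p)) (n : Inst T p) : Prop :=
  n ∈ M ∨ ∃ m ∈ M, Nonempty (n ⟶ m)

theorem inTilde_mono {T : RuleSystem C} {p : GM C} {M M' : Set (Inst T p)} (h : M ⊆ M')
    {n : Inst T p} : InTilde M n → InTilde M' n := by
  rintro (hn | ⟨m, hm, hnm⟩)
  · exact Or.inl (h hn)
  · exact Or.inr ⟨m, h hm, hnm⟩

/-- The subcategory `M̃` of `L/p`: its objects are the elements of `M` together with all
instances admitting a morphism into some element of `M`; its non-identity morphisms are the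
morphisms of `L/p` whose target lies in `M`. -/
def TildeCat (T : RuleSystem C) (p : GM C) (M : Set (Inst T p)) :=
  {n : Inst T p // InTilde M n}

instance (T : RuleSystem C) (p : GM C) (M : Set (Inst T p)) : Category (TildeCat T p M) where
  Hom n n' := {e : n.1 ⟶ n'.1 // n'.1 ∈ M ∨ n = n'}
  id n := ⟨𝟙 n.1, Or.inr rfl⟩
  comp {n n' n''} e f := ⟨e.1 ≫ f.1, by
    rcases f.2 with h | h
    · exact Or.inl h
    · rcases e.2 with h' | h'
      · exact Or.inl (h ▸ h')
      · exact Or.inr (h'.trans h)⟩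
  id_comp f := Subtype.ext (Category.id_comp _)
  comp_id f := Subtype.ext (Category.comp_id _)
  assoc f g h := Subtype.ext (Category.assoc _ _ _)

/-- The inclusion of the subcategory `M̃` into the instance category `L/p`. -/
def tildeIncl (T : RuleSystem C) (p : GM C) (M : Set (Inst T p)) :
    TildeCat T p M ⥤ Inst T p where
  obj n := n.1
  map e := e.1

/-- The restriction of the diagram `D_T(p)` to the subcategory `M̃`. -/
def DTilde (T : RuleSystem C) (p : GM C) (M : Set (Inst T p)) : TildeCat T p M ⥤ GM C :=
  tildeIncl T p M ⋙ DT T p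


/-- The suture diagram `S_{M,m}`: a multispan with one span
`T̃_p(M) ⟵ D(n) ⟶ D(m)` for every object `n` of `M̃` and every morphism `e : n ⟶ m` of
`L/p`; the left leg is the colimit component `(T̃_p(M))_n` and the right leg is `D(e)`.
The index `false` corresponds to `T̃_p(M)` and the index `true` to `D(m)`. -/
noncomputable def suture (T : RuleSystem C) (p : GM C) (M : Set (Inst T p))
    (m : Inst T p) : MultispanIndex
      { L := Σ n : TildeCat T p M, (n.1 ⟶ m)
        R := Bool
        fst := fun _ => false
        snd := fun _ => true } (GM C) where
  left x := (DTilde T p M).obj x.1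
  right b := match b with
    | false => colimit (DTilde T p M)
    | true => (DT T p).obj m
  fst x := colimit.ι (DTilde T p M) x.1
  snd x := (DT T p).map x.2

section Aux

variable (T : RuleSystem C) (p : GM C)

/-- The instance category is a preorder: homs are subsingletons. -/
theorem instSubsingletonHomInst (a b : Inst T p) : Subsingleton (a ⟶ b) := by
  constructor
  intro f g
  haveI : Mono b.obj.hom := b.property
  have h1 : T.L.map f.hom.left = T.L.map g.hom.left := by
    rw [← cancel_mono b.obj.hom, CostructuredArrow.w f.hom, CostructuredArrow.w g.hom]
  exact InducedCategory.hom_ext (CostructuredArrow.hom_ext f.hom g.hom (T.L.map_injective h1))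

attribute [local instance] instSubsingletonHomInst

variable (M : Set (Inst T p)) (m : Inst T p)

lemma exists_hom_to_m {n : Inst T p} (hn' : InTilde (insert m M) n)
    (h : ¬ InTilde M n) : Nonempty (n ⟶ m) := by
  rcases hn' with hn | ⟨m', hm', he⟩
  · rcases Set.mem_insert_iff.mp hn with rfl | hn
    · exact ⟨𝟙 n⟩
    · exact absurd (Or.inl hn) h
  · rcases Set.mem_insert_iff.mp hm' with rfl | hm'
    · exact he
    · exact absurd (Or.inr ⟨m', hm', he⟩) h

lemma suture_condition {n : Inst T p} (hn : InTilde M n) (e : n ⟶ m) :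
    colimit.ι (DTilde T p M) ⟨n, hn⟩ ≫ Multicoequalizer.π (suture T p M m) false =
      (DT T p).map e ≫ Multicoequalizer.π (suture T p M m) true :=
  Multicoequalizer.condition (suture T p M m) ⟨⟨n, hn⟩, e⟩

/-- Constructor for morphisms in `M̃`. -/
def tildeHom {M : Set (Inst T p)} (a b : TildeCat T p M) (f : a.1 ⟶ b.1)
    (h : b.1 ∈ M ∨ a = b) : a ⟶ b := ⟨f, h⟩

open Classical in
/-- The components of the colimit cocone over `M̃'`. -/
noncomputable def kapp (n : TildeCat T p (insert m M)) :
    (DTilde T p (insert m M)).obj n ⟶ multicoequalizer (suture T p M m) :=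
  if h : InTilde M n.1 then
    colimit.ι (DTilde T p M) ⟨n.1, h⟩ ≫ Multicoequalizer.π (suture T p M m) false
  else
    (DT T p).map (exists_hom_to_m T p M m n.2 h).some ≫
      Multicoequalizer.π (suture T p M m) true

lemma kapp_of_mem (n : TildeCat T p (insert m M)) (h : InTilde M n.1) :
    kapp T p M m n =
      colimit.ι (DTilde T p M) ⟨n.1, h⟩ ≫ Multicoequalizer.π (suture T p M m) false := by
  unfold kapp
  rw [dif_pos h]
  rfl

lemma kapp_of_hom (n : TildeCat T p (insert m M)) (e : n.1 ⟶ m) :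
    kapp T p M m n =
      (DT T p).map e ≫ Multicoequalizer.π (suture T p M m) true := by
  unfold kapp
  split_ifs with h
  · exact suture_condition T p M m h e
  · rw [Subsingleton.elim (exists_hom_to_m T p M m n.2 h).some e]
    rfl

/-- The cocone over the restriction of the diagram to `M̃'` with apex the
generalized pushout. -/
noncomputable def Kcone : Cocone (DTilde T p (insert m M)) where
  pt := multicoequalizer (suture T p M m)
  ι :=
    { app := kapp T p M m
      naturality := by
        rintro a b ⟨f, hf | hf⟩
        · rcases Set.mem_insert_iff.mp hf with hbm | hbM
          · rw [kapp_of_hom T p M m b (eqToHom hbm),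
              kapp_of_hom T p M m a (f ≫ eqToHom hbm)]
            have : (DTilde T p (insert m M)).map
                (⟨f, Or.inl hf⟩ : a ⟶ b) = (DT T p).map f := rfl
            rw [this, Functor.map_comp]
            exact (Category.assoc _ _ _).symm.trans (Category.comp_id _).symm
          · have ha : InTilde M a.1 := Or.inr ⟨b.1, hbM, ⟨f⟩⟩
            rw [kapp_of_mem T p M m b (Or.inl hbM), kapp_of_mem T p M m a ha]
            have hw := colimit.w (DTilde T p M)
              (tildeHom T p ⟨a.1, ha⟩ ⟨b.1, Or.inl hbM⟩ f (Or.inl hbM))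
            have : (DTilde T p (insert m M)).map
                (⟨f, Or.inl hf⟩ : a ⟶ b) = (DTilde T p M).map
                (tildeHom T p ⟨a.1, ha⟩ ⟨b.1, Or.inl hbM⟩ f (Or.inl hbM)) := rfl
            rw [this]
            simp only [Functor.const_obj_map, Category.comp_id]
            erw [← Category.assoc, hw]
            exact (Category.comp_id _).symm
        · subst hf
          have : f = 𝟙 a.1 := Subsingleton.elim _ _
          subst this
          have : (DTilde T p (insert m M)).map
              (⟨𝟙 a.1, Or.inr rfl⟩ : a ⟶ a) = 𝟙 _ := (DTilde T p (insert m M)).map_id a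
          rw [this]
          simp }

/-- The inclusion of `M̃` into `M̃'`. -/
def Jfun : TildeCat T p M ⥤ TildeCat T p (insert m M) where
  obj n := ⟨n.1, inTilde_mono (Set.subset_insert m M) n.2⟩
  map {a b} g := ⟨g.1, by
    rcases g.2 with h | h
    · exact Or.inl (Set.subset_insert m M h)
    · subst h; exact Or.inr rfl⟩
  map_id _ := rfl
  map_comp _ _ := rfl

/-- `m` as an object of `M̃'`. -/
def mEl : TildeCat T p (insert m M) := ⟨m, Or.inl (Set.mem_insert m M)⟩

/-- Restriction of a cocone over `M̃'` to a cocone over `M̃`. -/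
noncomputable def wcocone (s : Cocone (DTilde T p (insert m M))) :
    Cocone (DTilde T p M) where
  pt := s.pt
  ι :=
    { app := fun n => s.ι.app ((Jfun T p M m).obj n)
      naturality := fun a b g => s.ι.naturality ((Jfun T p M m).map g) }

noncomputable def descHom (s : Cocone (DTilde T p (insert m M))) :
    multicoequalizer (suture T p M m) ⟶ s.pt :=
  Multicoequalizer.desc (suture T p M m) s.pt
    (fun b => match b with
      | false => colimit.desc (DTilde T p M) (wcocone T p M m s)
      | true => s.ι.app (mEl T p M m))
    (by
      rintro ⟨n, e⟩
      show colimit.ι (DTilde T p M) n ≫ colimit.desc (DTilde T p M) (wcocone T p M m s) =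
        (DT T p).map e ≫ s.ι.app (mEl T p M m)
      rw [colimit.ι_desc]
      have := s.ι.naturality
        (tildeHom T p ((Jfun T p M m).obj n) (mEl T p M m) e (Or.inl (Set.mem_insert m M)))
      simp only [Functor.const_obj_map, Category.comp_id] at this
      exact this.symm)

lemma kapp_mEl : kapp T p M m (mEl T p M m) = Multicoequalizer.π (suture T p M m) true := by
  rw [kapp_of_hom T p M m (mEl T p M m) (𝟙 m)]
  have : (DT T p).map (𝟙 m) = 𝟙 _ := (DT T p).map_id m
  erw [this]
  exact Category.id_comp _

lemma kapp_desc (s : Cocone (DTilde T p (insert m M))) (n : TildeCat T p (insert m M)) :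
    kapp T p M m n ≫ descHom T p M m s = s.ι.app n := by
    by_cases h : InTilde M n.1
    · erw [kapp_of_mem T p M m n h, Category.assoc]
      unfold descHom
      erw [Multicoequalizer.π_desc, colimit.ι_desc]
      rfl
    · obtain ⟨e⟩ := exists_hom_to_m T p M m n.2 h
      erw [kapp_of_hom T p M m n e, Category.assoc]
      unfold descHom
      erw [Multicoequalizer.π_desc]
      have := s.ι.naturality
        (tildeHom T p n (mEl T p M m) e (Or.inl (Set.mem_insert m M)))
      simp only [Functor.const_obj_map, Category.comp_id] at this
      exact this
noncomputable def KconeIsColimit : IsColimit (Kcone T p M m) where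
  desc s := descHom T p M m s
  fac s n := kapp_desc T p M m s n
  uniq s g hg := by
    have hg' : ∀ j, kapp T p M m j ≫ g = s.ι.app j := hg
    apply Multicoequalizer.hom_ext
    rintro (_ | _)
    · apply colimit.hom_ext
      intro n
      have h1 : colimit.ι (DTilde T p M) n ≫ Multicoequalizer.π (suture T p M m) false =
          kapp T p M m ((Jfun T p M m).obj n) :=
        (kapp_of_mem T p M m ((Jfun T p M m).obj n) n.2).symm
      show colimit.ι (DTilde T p M) n ≫ Multicoequalizer.π (suture T p M m) false ≫ g =
        colimit.ι (DTilde T p M) n ≫ Multicoequalizer.π (suture T p M m) false ≫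
          descHom T p M m s
      erw [← Category.assoc, ← Category.assoc, h1, hg', kapp_desc]
    · show Multicoequalizer.π (suture T p M m) true ≫ g =
        Multicoequalizer.π (suture T p M m) true ≫ descHom T p M m s
      erw [← kapp_mEl T p M m, hg', kapp_desc]

end Aux

/-- for partial decompositions `M` and
`M' = M ∪ {m}` of `p`, the colimit ("generalized pushout") of the suture diagram
`S_{M,m}`, with structure morphisms `t = π false : T̃_p(M) ⟶ Colim(S_{M,m})` and
`c = π true : D(m) ⟶ Colim(S_{M,m})`, yields a colimit cocone of the restriction of
`D_T(p)` to `M̃'` with the same apex, whose component at each `n` of `M̃` is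
`t ∘ (T̃_p(M))_n` and whose component at each object `n` with a morphism `e : n ⟶ m`
is `c ∘ D(e)`. -/
theorem stmt3 (T : RuleSystem C) (p : GM C) (M : Set (Inst T p)) (m : Inst T p)
    (hMmax : ∀ n ∈ M, MaximalInst n) (hm : MaximalInst m) (hmM : m ∉ M)
    (hMconn : IsConnected (TildeCat T p M))
    (hM'conn : IsConnected (TildeCat T p (insert m M))) :
    ∃ (K : Cocone (DTilde T p (insert m M))) (_ : IsColimit K)
      (hpt : K.pt = multicoequalizer (suture T p M m)),
      (∀ (n : Inst T p) (hn : InTilde M n),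
        K.ι.app ⟨n, inTilde_mono (Set.subset_insert m M) hn⟩ ≫ eqToHom hpt =
          colimit.ι (DTilde T p M) ⟨n, hn⟩ ≫
            Multicoequalizer.π (suture T p M m) false) ∧
      (∀ (n : Inst T p) (hn' : InTilde (insert m M) n) (e : n ⟶ m),
        K.ι.app ⟨n, hn'⟩ ≫ eqToHom hpt =
          (DT T p).map e ≫ Multicoequalizer.π (suture T p M m) true) := by
  refine ⟨Kcone T p M m, KconeIsColimit T p M m, rfl, ?_, ?_⟩
  · intro n hn
    erw [eqToHom_refl, Category.comp_id]
    exact kapp_of_mem T p M m ⟨n, inTilde_mono (Set.subset_insert m M) hn⟩ hn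
  · intro n hn' e
    erw [eqToHom_refl, Category.comp_id]
    exact kapp_of_hom T p M m ⟨n, hn'⟩ e
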